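/- Let λ be a nonzero real number, let p, q, r, v₁, v₂, v : ℝ → ℝ be smooth with v(x) > 0 for all x, set S := [[p,q],[r,−p]] and V := [[v₁, v₂],[v, −v₁]], and assume −λV′ + [V, S − λA] = 0 on ℝ and v₁² + v₂·v = F identically for a real constant F. Define K := [[v^{−1/2}, v₁·v^{−1/2}],[0, v^{1/2}]], Λ := [[0,F],[1,0]], and M := K⁻¹(S − λA)K + λ·K⁻¹K′. Then M = ((2r − λ)/(2v))·Λ, i.e. M = [[0, v⁻¹(r − λ/2)·F],[v⁻¹(r − λ/2), 0]], identically on ℝ. -/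

import Mathlib

open Matrix

/-- The constant matrix `A = (1/2)·[[0,1],[1,0]]`. -/
noncomputable def A : Matrix (Fin 2) (Fin 2) ℝ := (1/2 : ℝ) • !![0, 1; 1, 0]

/-- Entrywise derivative of a matrix-valued function on `ℝ`. -/
noncomputable def mderiv (f : ℝ → Matrix (Fin 2) (Fin 2) ℝ) (x : ℝ) :
    Matrix (Fin 2) (Fin 2) ℝ :=
  Matrix.of fun i j => deriv (fun t => f t i j) x

lemma eq2 {a b c d e f g h : ℝ} (h1 : a = e) (h2 : b = f) (h3 : c = g)
    (h4 : d = h) : !![a,b;c,d] = !![e,f;g,h] := by rw [h1,h2,h3,h4]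

set_option maxHeartbeats 1000000 in
lemma smul2 (c a b c' d : ℝ) : c • !![a,b;c',d] = !![c*a,c*b;c*c',c*d] := by
  ext i j; fin_cases i <;> fin_cases j <;> simp

lemma add2 (a b c d e f g h : ℝ) : !![a,b;c,d] + !![e,f;g,h] = !![a+e,b+f;c+g,d+h] := by
  ext i j; fin_cases i <;> fin_cases j <;> simp

set_option maxHeartbeats 1000000 in
theorem M_explicit_form (lam : ℝ) (hlam : lam ≠ 0)
    (p q r v₁ v₂ v : ℝ → ℝ)
    (hp : ContDiff ℝ (⊤ : ℕ∞) p) (hq : ContDiff ℝ (⊤ : ℕ∞) q)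
    (hr : ContDiff ℝ (⊤ : ℕ∞) r) (hv₁ : ContDiff ℝ (⊤ : ℕ∞) v₁)
    (hv₂ : ContDiff ℝ (⊤ : ℕ∞) v₂) (hv : ContDiff ℝ (⊤ : ℕ∞) v)
    (hvpos : ∀ x, 0 < v x)
    (S V : ℝ → Matrix (Fin 2) (Fin 2) ℝ)
    (hS : S = fun x => !![p x, q x; r x, -p x])
    (hV : V = fun x => !![v₁ x, v₂ x; v x, -v₁ x])
    (hLax : ∀ x : ℝ,
      (-lam) • mderiv V x + (V x * (S x - lam • A) - (S x - lam • A) * V x) = 0)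
    (F : ℝ) (hF : ∀ x, v₁ x ^ 2 + v₂ x * v x = F)
    (K : ℝ → Matrix (Fin 2) (Fin 2) ℝ)
    (hK : K = fun x => !![(Real.sqrt (v x))⁻¹, v₁ x * (Real.sqrt (v x))⁻¹;
                          0, Real.sqrt (v x)])
    (Λ : Matrix (Fin 2) (Fin 2) ℝ) (hΛ : Λ = !![0, F; 1, 0])
    (M : ℝ → Matrix (Fin 2) (Fin 2) ℝ)
    (hM : M = fun x => (K x)⁻¹ * (S x - lam • A) * K x + lam • ((K x)⁻¹ * mderiv K x)) :
    ∀ x : ℝ, M x = ((2 * r x - lam) / (2 * v x)) • Λ ∧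
      M x = !![0, (v x)⁻¹ * (r x - lam / 2) * F;
               (v x)⁻¹ * (r x - lam / 2), 0] := by
  -- explicit form of S - lam • A
  have hSA : ∀ y, S y - lam • A = !![p y, q y - lam/2; r y - lam/2, -p y] := by
    intro y; rw [hS]
    ext i j; fin_cases i <;> fin_cases j <;> simp [A] <;> ring
  intro x
  have hvx := hvpos x
  have hvne : v x ≠ 0 := ne_of_gt hvx
  have hwpos : 0 < Real.sqrt (v x) := Real.sqrt_pos.mpr hvx
  have hwne : Real.sqrt (v x) ≠ 0 := ne_of_gt hwpos
  have hw2 : Real.sqrt (v x) * Real.sqrt (v x) = v x := Real.mul_self_sqrt hvx.le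
  -- derivatives
  have hdv : HasDerivAt v (deriv v x) x :=
    ((hv.differentiable (by norm_num)) x).hasDerivAt
  have hdv₁ : HasDerivAt v₁ (deriv v₁ x) x :=
    ((hv₁.differentiable (by norm_num)) x).hasDerivAt
  have hdw : HasDerivAt (fun t => Real.sqrt (v t))
      (deriv v x / (2 * Real.sqrt (v x))) x := by
    have := (Real.hasDerivAt_sqrt hvne).comp x hdv
    exact this.congr_deriv (by ring)
  have hdwinv : HasDerivAt (fun t => (Real.sqrt (v t))⁻¹)
      (-(deriv v x / (2 * Real.sqrt (v x))) / (Real.sqrt (v x))^2) x := hdw.inv hwne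
  have hd01 : HasDerivAt (fun t => v₁ t * (Real.sqrt (v t))⁻¹)
      (deriv v₁ x * (Real.sqrt (v x))⁻¹ +
        v₁ x * (-(deriv v x / (2 * Real.sqrt (v x))) / (Real.sqrt (v x))^2)) x :=
    hdv₁.mul hdwinv
  -- mderiv K
  have hKd : mderiv K x = !![-(deriv v x / (2 * Real.sqrt (v x))) / (Real.sqrt (v x))^2,
      deriv v₁ x * (Real.sqrt (v x))⁻¹ +
        v₁ x * (-(deriv v x / (2 * Real.sqrt (v x))) / (Real.sqrt (v x))^2);
      0, deriv v x / (2 * Real.sqrt (v x))] := by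
    ext i j
    fin_cases i <;> fin_cases j <;> simp [mderiv, hK]
    · exact hdwinv.deriv
    · exact hd01.deriv
    · exact hdw.deriv
  -- K inverse
  have hKinv : (K x)⁻¹ = !![Real.sqrt (v x), -(v₁ x) * (Real.sqrt (v x))⁻¹;
      0, (Real.sqrt (v x))⁻¹] := by
    apply Matrix.inv_eq_right_inv
    rw [hK]
    ext i j; fin_cases i <;> fin_cases j <;>
      simp [Matrix.mul_fin_two, Matrix.one_fin_two] <;> field_simp <;> ring
  -- scalar Lax equations
  have hlaxx := hLax x
  rw [hV, hSA] at hlaxx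
  have e1 : -lam * deriv v₁ x + (v₂ x * (r x - lam/2) - v x * (q x - lam/2)) = 0 := by
    have h := congrFun (congrFun hlaxx 0) 0
    simp [mderiv, Matrix.mul_fin_two, Matrix.add_apply, Matrix.sub_apply] at h
    linarith [h]
  have e3 : -lam * deriv v x + (2 * p x * v x - 2 * v₁ x * (r x - lam/2)) = 0 := by
    have h := congrFun (congrFun hlaxx 1) 0
    simp [mderiv, Matrix.mul_fin_two, Matrix.add_apply, Matrix.sub_apply] at h
    linarith [h]
  have hdvx : deriv v x = (2 * p x * v x - 2 * v₁ x * (r x - lam/2)) / lam := by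
    field_simp; linarith [e3]
  have hdv1x : deriv v₁ x = (v₂ x * (r x - lam/2) - v x * (q x - lam/2)) / lam := by
    field_simp; linarith [e1]
  have hv2x : v₂ x = (F - v₁ x ^ 2) / v x := by
    field_simp; linarith [hF x]
  have key : M x = !![0, (v x)⁻¹ * (r x - lam / 2) * F;
               (v x)⁻¹ * (r x - lam / 2), 0] := by
    rw [hM]
    simp only
    rw [hKinv, hSA, hKd, hK]
    simp only
    rw [Matrix.mul_fin_two, Matrix.mul_fin_two, Matrix.mul_fin_two, smul2, add2]
    refine eq2 ?_ ?_ ?_ ?_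
    · rw [hdvx]
      generalize hg : Real.sqrt (v x) = s
      have hs : s * s = v x := by rw [← hg]; exact hw2
      have hsne : s ≠ 0 := by rw [← hg]; exact hwne
      rw [← hs]
      field_simp
      ring
    · rw [hdvx, hdv1x, hv2x]
      generalize hg : Real.sqrt (v x) = s
      have hs : s * s = v x := by rw [← hg]; exact hw2
      have hsne : s ≠ 0 := by rw [← hg]; exact hwne
      rw [← hs]
      field_simp
      ring
    · generalize hg : Real.sqrt (v x) = s
      have hs : s * s = v x := by rw [← hg]; exact hw2
      have hsne : s ≠ 0 := by rw [← hg]; exact hwne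
      rw [← hs]
      field_simp
      ring
    · rw [hdvx]
      generalize hg : Real.sqrt (v x) = s
      have hs : s * s = v x := by rw [← hg]; exact hw2
      have hsne : s ≠ 0 := by rw [← hg]; exact hwne
      rw [← hs]
      field_simp
      ring
  refine ⟨?_, key⟩
  rw [key, hΛ]
  ext i j
  fin_cases i <;> fin_cases j <;> simp [smul_eq_mul]
  · left
    rw [eq_div_iff (by positivity : (2:ℝ) * v x ≠ 0)]
    field_simp
  · rw [eq_comm, div_eq_iff (by positivity : (2:ℝ) * v x ≠ 0)]
    field_simp
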